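/- For every positive integer m and n ≥ 1, the number f_n(m) of sublattices of ℤⁿ of index m satisfies m^{n-1} ≤ f_n(m) ≤ m^n. -/

import Mathlib

open AddSubgroup




/-- Membership in a subgroup of ℤ is detected by casting to `ZMod S.index`. -/
lemma int_mem_iff (S : AddSubgroup ℤ) (t : ℤ) : t ∈ S ↔ ((t : ZMod S.index) = 0) := by
  obtain ⟨a, rfl⟩ := Int.subgroup_cyclic S
  rw [← zmultiples_eq_closure, Int.index_zmultiples, Int.mem_zmultiples_iff,
    ZMod.intCast_zmod_eq_zero_iff_dvd, Int.natAbs_dvd]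

open AddSubgroup

/-- Componentwise cast hom. -/
def castPi (n m : ℕ) : (Fin n → ℤ) →+ (Fin n → ZMod m) where
  toFun x := fun i => (x i : ZMod m)
  map_zero' := by funext i; simp
  map_add' x y := by funext i; push_cast; simp

lemma finite_subCount (n m : ℕ) (hm : m ≠ 0) :
    Finite {H : AddSubgroup (Fin n → ℤ) // H.index = m} := by
  have key : ∀ H : {H : AddSubgroup (Fin n → ℤ) // H.index = m},
      (castPi n m).ker ≤ H.1 := by
    rintro ⟨H, hH⟩ x hx
    simp only [AddMonoidHom.mem_ker] at hx
    have hdvd : ∀ i, (m : ℤ) ∣ x i := by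
      intro i
      have := congrFun hx i
      simpa [castPi, ZMod.intCast_zmod_eq_zero_iff_dvd] using this
    have : x = m • fun i => x i / m := by
      funext i
      simp only [Pi.smul_apply, nsmul_eq_mul]
      exact (Int.mul_ediv_cancel' (hdvd i)).symm
    rw [this]
    have := H.nsmul_index_mem (fun i => x i / m)
    rwa [hH] at this
  have : Function.Injective
      (fun H : {H : AddSubgroup (Fin n → ℤ) // H.index = m} => H.1.map (castPi n m)) := by
    intro H H' h
    have h1 := congrArg (AddSubgroup.comap (castPi n m)) h
    rw [AddSubgroup.comap_map_eq, AddSubgroup.comap_map_eq, sup_of_le_left (key H),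
      sup_of_le_left (key H')] at h1
    exact Subtype.ext h1
  haveI : NeZero m := ⟨hm⟩
  have : Finite (AddSubgroup (Fin n → ZMod m)) :=
    Finite.of_injective _ SetLike.coe_injective
  exact Finite.of_injective _ ‹Function.Injective _›


open AddSubgroup

lemma index_map_addEquiv {A B : Type*} [AddCommGroup A] [AddCommGroup B]
    (e : A ≃+ B) (H : AddSubgroup A) :
    (H.map e.toAddMonoidHom).index = H.index := by
  rw [AddSubgroup.map_equiv_eq_comap_symm']
  exact AddSubgroup.index_comap_of_surjective _ e.symm.surjective

/-- Transfer the counting problem along an additive equivalence. -/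
def subCountEquiv {A B : Type*} [AddCommGroup A] [AddCommGroup B] (e : A ≃+ B) (m : ℕ) :
    {H : AddSubgroup A // H.index = m} ≃ {H : AddSubgroup B // H.index = m} where
  toFun H := ⟨H.1.map e.toAddMonoidHom, by rw [index_map_addEquiv]; exact H.2⟩
  invFun K := ⟨K.1.map e.symm.toAddMonoidHom, by rw [index_map_addEquiv]; exact K.2⟩
  left_inv H := by
    ext x
    simp [AddSubgroup.mem_map]
  right_inv K := by
    ext x
    simp [AddSubgroup.mem_map]


/-- `(Fin (n+1) → ℤ) ≃+ (Fin n → ℤ) × ℤ`. -/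
def finSnocEquiv (n : ℕ) : (Fin (n + 1) → ℤ) ≃+ (Fin n → ℤ) × ℤ where
  toFun x := (fun i => x i.castSucc, x (Fin.last n))
  invFun p := Fin.snoc p.1 p.2
  left_inv x := by
    exact Fin.snoc_init_self x
  right_inv p := by
    ext i
    · simp [Fin.init_snoc]
    · simp
  map_add' x y := by
    simp [Prod.ext_iff]
    constructor <;> rfl


open AddSubgroup

/-- Linear form with coefficients `c` mod `m`. -/
def linForm {n m : ℕ} (c : Fin n → ZMod m) : (Fin n → ℤ) →+ ZMod m where
  toFun x := ∑ i, c i * (x i : ZMod m)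
  map_zero' := by simp
  map_add' x y := by
    rw [← Finset.sum_add_distrib]
    apply Finset.sum_congr rfl
    intro i _
    have : ((x + y) i : ℤ) = x i + y i := rfl
    rw [this]
    push_cast
    ring

lemma linForm_single {n m : ℕ} (c : Fin n → ZMod m) (j : Fin n) (t : ℤ) :
    linForm c (Pi.single j t) = c j * (t : ZMod m) := by
  simp only [linForm, AddMonoidHom.coe_mk, ZeroHom.coe_mk]
  rw [Finset.sum_eq_single j]
  · simp
  · intro b _ hb
    simp [Pi.single_apply, hb]
  · simp

lemma linForm_surjective {n m : ℕ} [NeZero m] (c : Fin n → ZMod m) (j : Fin n) (hj : c j = 1) :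
    Function.Surjective (linForm c) := by
  intro z
  refine ⟨Pi.single j (z.val : ℤ), ?_⟩
  rw [linForm_single, hj, one_mul]
  rw [Int.cast_natCast, ZMod.natCast_val, ZMod.cast_id]

lemma index_ker_linForm {n m : ℕ} [NeZero m] (c : Fin n → ZMod m) (j : Fin n) (hj : c j = 1) :
    (linForm c).ker.index = m := by
  rw [AddSubgroup.index_ker]
  rw [AddMonoidHom.range_eq_top_of_surjective _ (linForm_surjective c j hj)]
  rw [Nat.card_congr (Equiv.subtypeUnivEquiv (by simp [AddSubgroup.mem_top]))]
  simp [Nat.card_eq_fintype_card]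

/-- Lower bound injection: `a : Fin k → ZMod m` gives kernel subgroups. -/
lemma lower_inj (k m : ℕ) [NeZero m] :
    Function.Injective (fun a : Fin k → ZMod m =>
      (linForm (Fin.snoc a 1 : Fin (k+1) → ZMod m)).ker) := by
  intro a b h
  funext i
  have hx : Pi.single i.castSucc 1 - Pi.single (Fin.last k) ((a i).val : ℤ)
      ∈ (linForm (Fin.snoc a 1 : Fin (k+1) → ZMod m)).ker := by
    simp only [AddMonoidHom.mem_ker, map_sub, linForm_single]
    simp [ZMod.natCast_val, ZMod.cast_id]
  simp only [] at h
  rw [h] at hx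
  simp only [AddMonoidHom.mem_ker, map_sub, linForm_single] at hx
  simp [ZMod.natCast_val, ZMod.cast_id, sub_eq_zero] at hx
  exact hx.symm


open AddSubgroup

section HomBound

variable {n : ℕ} (K : AddSubgroup (Fin n → ℤ)) (d : ℕ)

/-- The submodule associated to `K`. -/
noncomputable abbrev KMod := AddSubgroup.toIntSubmodule K

noncomputable def eNK : (KMod K) ≃+ K :=
  AddEquiv.refl _

noncomputable def homEncode (f : ↥K →+ ZMod d) :
    Module.Free.ChooseBasisIndex ℤ (KMod K) → ZMod d :=
  fun i => f (eNK K (Module.Free.chooseBasis ℤ (KMod K) i))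

lemma homEncode_injective : Function.Injective (homEncode K d) := by
  intro f g h
  have hfg : (f.comp (eNK K).toAddMonoidHom).toIntLinearMap =
      (g.comp (eNK K).toAddMonoidHom).toIntLinearMap := by
    apply Module.Basis.ext (Module.Free.chooseBasis ℤ (KMod K))
    intro i
    exact congrFun h i
  ext x
  have := congrArg (fun F => F ((eNK K).symm x)) (congrArg LinearMap.toAddMonoidHom hfg)
  simpa using this

lemma chooseBasisIndex_card_le :
    Nat.card (Module.Free.ChooseBasisIndex ℤ (KMod K)) ≤ n := by
  have b := Module.Free.chooseBasis ℤ (KMod K)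
  have hli : LinearIndependent ℤ (fun i => ((b i : Fin n → ℤ))) := by
    have := b.linearIndependent
    have hinj : Function.Injective ((KMod K).subtype) := Subtype.coe_injective
    exact this.map' (KMod K).subtype (LinearMap.ker_eq_bot.mpr hinj)
  haveI : Fintype (Module.Free.ChooseBasisIndex ℤ (KMod K)) :=
    Module.Free.ChooseBasisIndex.fintype ℤ (KMod K)
  rw [Nat.card_eq_fintype_card]
  have := hli.fintype_card_le_finrank
  simpa using this

lemma hom_finite [NeZero d] : Finite (↥K →+ ZMod d) := by
  haveI : Fintype (Module.Free.ChooseBasisIndex ℤ (KMod K)) :=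
    Module.Free.ChooseBasisIndex.fintype ℤ (KMod K)
  exact Finite.of_injective _ (homEncode_injective K d)

lemma hom_card_le [NeZero d] : Nat.card (↥K →+ ZMod d) ≤ d ^ n := by
  haveI : Fintype (Module.Free.ChooseBasisIndex ℤ (KMod K)) :=
    Module.Free.ChooseBasisIndex.fintype ℤ (KMod K)
  haveI := hom_finite K d
  calc Nat.card (↥K →+ ZMod d)
      ≤ Nat.card (Module.Free.ChooseBasisIndex ℤ (KMod K) → ZMod d) :=
        Nat.card_le_card_of_injective _ (homEncode_injective K d)
    _ = d ^ (Nat.card (Module.Free.ChooseBasisIndex ℤ (KMod K))) := by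
        simp [Nat.card_eq_fintype_card, Fintype.card_fun, ZMod.card]
    _ ≤ d ^ n := Nat.pow_le_pow_right (Nat.pos_of_ne_zero (NeZero.ne d))
        (chooseBasisIndex_card_le K)

end HomBound

open AddSubgroup



section Step

variable {G : Type*} [AddCommGroup G]

/-- The index of the intersection with the `ℤ` axis. -/
noncomputable def axisIdx (H : AddSubgroup (G × ℤ)) : ℕ :=
  (H.comap (AddMonoidHom.inr G ℤ)).index

/-- Projection of `H` to `G`. -/
noncomputable def projSub (H : AddSubgroup (G × ℤ)) : AddSubgroup G :=
  H.map (AddMonoidHom.fst G ℤ)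

lemma index_eq_axis_mul_proj (H : AddSubgroup (G × ℤ)) :
    H.index = axisIdx H * (projSub H).index := by
  have hfst : Function.Surjective (AddMonoidHom.fst G ℤ) := fun g => ⟨(g, 0), rfl⟩
  have h1 : (projSub H).index = (H ⊔ (AddMonoidHom.fst G ℤ).ker).index := by
    rw [projSub, AddSubgroup.index_map,
      AddMonoidHom.range_eq_top_of_surjective _ hfst, AddSubgroup.index_top, mul_one]
  have h2 : axisIdx H = H.relIndex (H ⊔ (AddMonoidHom.fst G ℤ).ker) := by
    rw [axisIdx, AddSubgroup.index_comap]
    have hr : (AddMonoidHom.inr G ℤ).range = (AddMonoidHom.fst G ℤ).ker := by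
      ext x
      simp only [AddMonoidHom.mem_range, AddMonoidHom.mem_ker, AddMonoidHom.coe_fst]
      constructor
      · rintro ⟨y, rfl⟩; rfl
      · intro h
        refine ⟨x.2, ?_⟩
        have : (AddMonoidHom.inr G ℤ) x.2 = (0, x.2) := rfl
        rw [this, ← h]
    rw [hr, sup_comm, AddSubgroup.relIndex_sup_right]
  rw [h1, h2, AddSubgroup.relIndex_mul_index le_sup_left]

end Step

section Step2

variable {G : Type*} [AddCommGroup G]

open scoped Classical in
/-- The "slopeZ" function of `H` in direction `v`, mod `d`. -/
noncomputable def slopeZ (H : AddSubgroup (G × ℤ)) (d : ℕ) (v : G) : ZMod d :=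
  if h : ∃ t : ℤ, (v, t) ∈ H then ((h.choose : ℤ) : ZMod d) else 0

lemma mem_projSub_iff {H : AddSubgroup (G × ℤ)} {v : G} :
    v ∈ projSub H ↔ ∃ t : ℤ, (v, t) ∈ H := by
  constructor
  · rintro ⟨⟨w, t⟩, hw, rfl⟩
    exact ⟨t, hw⟩
  · rintro ⟨t, ht⟩
    exact ⟨(v, t), ht, rfl⟩

lemma axis_mem_iff {H : AddSubgroup (G × ℤ)} {d : ℕ} (hd : axisIdx H = d) (t : ℤ) :
    (((0 : G), t) ∈ H) ↔ ((t : ZMod d) = 0) := by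
  subst hd
  rw [show ((0:G), t) = (AddMonoidHom.inr G ℤ) t from rfl, ← AddSubgroup.mem_comap]
  exact int_mem_iff _ t

/-- Claim A: membership characterization. -/
lemma mem_iff_slopeZ {H : AddSubgroup (G × ℤ)} {d : ℕ} (hd : axisIdx H = d)
    (v : G) (t : ℤ) :
    (v, t) ∈ H ↔ v ∈ projSub H ∧ ((t : ZMod d) = slopeZ H d v) := by
  classical
  constructor
  · intro h
    have hv : v ∈ projSub H := mem_projSub_iff.mpr ⟨t, h⟩
    refine ⟨hv, ?_⟩
    have hex : ∃ t' : ℤ, (v, t') ∈ H := ⟨t, h⟩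
    have ht0 := hex.choose_spec
    have hdiff : ((0 : G), t - hex.choose) ∈ H := by
      have := H.sub_mem h ht0
      simpa using this
    have := (axis_mem_iff hd _).mp hdiff
    push_cast at this
    rw [slopeZ, dif_pos hex]
    rwa [sub_eq_zero] at this
  · rintro ⟨hv, ht⟩
    have hex : ∃ t' : ℤ, (v, t') ∈ H := mem_projSub_iff.mp hv
    have ht0 := hex.choose_spec
    rw [slopeZ, dif_pos hex] at ht
    have hdiff : ((0 : G), t - hex.choose) ∈ H := by
      rw [axis_mem_iff hd]
      push_cast
      rw [ht]
      ring
    have := H.add_mem ht0 hdiff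
    simpa using this

lemma slopeZ_eq {H : AddSubgroup (G × ℤ)} {d : ℕ} (hd : axisIdx H = d)
    {v : G} {t : ℤ} (h : (v, t) ∈ H) : slopeZ H d v = (t : ZMod d) :=
  ((mem_iff_slopeZ hd v t).mp h).2.symm

/-- Claim B packaged: the slopeZ as an additive hom on the projection. -/
noncomputable def slopeZHom (H : AddSubgroup (G × ℤ)) (d : ℕ) (hd : axisIdx H = d) :
    ↥(projSub H) →+ ZMod d where
  toFun x := slopeZ H d x.1
  map_zero' := by
    have : ((0 : G), (0 : ℤ)) ∈ H := H.zero_mem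
    have := slopeZ_eq hd this
    simpa using this
  map_add' x y := by
    obtain ⟨s, hs⟩ := mem_projSub_iff.mp x.2
    obtain ⟨t, ht⟩ := mem_projSub_iff.mp y.2
    have hsum : ((x : G) + y, s + t) ∈ H := H.add_mem hs ht
    have h1 := slopeZ_eq hd hs
    have h2 := slopeZ_eq hd ht
    have h3 := slopeZ_eq hd hsum
    push_cast at h3
    simp only [AddSubgroup.coe_add]
    rw [h1, h2, h3]

lemma slopeZHom_apply {H : AddSubgroup (G × ℤ)} {d : ℕ} (hd : axisIdx H = d)
    (x : ↥(projSub H)) : slopeZHom H d hd x = slopeZ H d x.1 := rfl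

/-- The injectivity of `H ↦ (projSub H, slopeZHom H)`. -/
lemma le_of_data {H H' : AddSubgroup (G × ℤ)} {d : ℕ}
    (hd : axisIdx H = d) (hd' : axisIdx H' = d)
    (hK : projSub H = projSub H')
    (hs : ∀ v : G, v ∈ projSub H → slopeZ H d v = slopeZ H' d v) :
    H ≤ H' := by
  rintro ⟨v, t⟩ h
  obtain ⟨hv, ht⟩ := (mem_iff_slopeZ hd v t).mp h
  rw [mem_iff_slopeZ hd' v t]
  refine ⟨hK ▸ hv, ?_⟩
  rw [ht, hs v hv]

end Step2

open AddSubgroup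


lemma hom_heq {G : Type*} [AddCommGroup G] {K K' : AddSubgroup G} (h : K = K') {d : ℕ}
    {f : ↥K →+ ZMod d} {g : ↥K' →+ ZMod d} (hfg : HEq f g) {v : G}
    (hv : v ∈ K) (hv' : v ∈ K') : f ⟨v, hv⟩ = g ⟨v, hv'⟩ := by
  subst h
  rw [eq_of_heq hfg]

section Main

variable (n m : ℕ)

/-- Fiber bound for a fixed divisor `d`. -/
lemma fiber_card_le (hm : m ≠ 0) (d : ℕ) (hd : d ∈ m.divisors) :
    Nat.card {x : {H : AddSubgroup ((Fin n → ℤ) × ℤ) // H.index = m} // axisIdx x.1 = d} ≤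
      Nat.card {K : AddSubgroup (Fin n → ℤ) // K.index = m / d} * d ^ n := by
  obtain ⟨hdvd, -⟩ := Nat.mem_divisors.mp hd
  have hd0 : d ≠ 0 := by
    rintro rfl
    exact hm (Nat.eq_zero_of_zero_dvd hdvd)
  haveI : NeZero d := ⟨hd0⟩
  have hmd0 : m / d ≠ 0 := Nat.div_ne_zero_iff.mpr ⟨hd0, Nat.le_of_dvd (Nat.pos_of_ne_zero hm) hdvd⟩
  haveI hYfin : Finite {K : AddSubgroup (Fin n → ℤ) // K.index = m / d} := finite_subCount n _ hmd0
  set Y := {K : AddSubgroup (Fin n → ℤ) // K.index = m / d}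
  haveI : ∀ K : Y, Finite (↥K.1 →+ ZMod d) := fun K => hom_finite K.1 d
  -- the injection into the sigma type
  have hproj : ∀ x : {x : {H : AddSubgroup ((Fin n → ℤ) × ℤ) // H.index = m} // axisIdx x.1 = d},
      (projSub x.1.1).index = m / d := by
    rintro ⟨⟨H, hH⟩, hx⟩
    have := index_eq_axis_mul_proj H
    rw [hH, hx] at this
    show (projSub H).index = m / d
    rw [this]
    exact (Nat.mul_div_cancel_left _ (Nat.pos_of_ne_zero hd0)).symm
  set Ψ : {x : {H : AddSubgroup ((Fin n → ℤ) × ℤ) // H.index = m} // axisIdx x.1 = d} →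
      Σ K : Y, (↥K.1 →+ ZMod d) :=
    fun x => ⟨⟨projSub x.1.1, hproj x⟩, slopeZHom x.1.1 d x.2⟩ with hΨ
  have hinj : Function.Injective Ψ := by
    rintro x y h
    simp only [hΨ] at h
    have h1 : (⟨projSub x.1.1, hproj x⟩ : Y) = ⟨projSub y.1.1, hproj y⟩ :=
      congrArg Sigma.fst h
    have hK : projSub x.1.1 = projSub y.1.1 := congrArg Subtype.val h1
    have h2 : HEq (slopeZHom x.1.1 d x.2) (slopeZHom y.1.1 d y.2) :=
      (Sigma.mk.inj_iff.mp h).2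
    have hs : ∀ v, v ∈ projSub x.1.1 → slopeZ x.1.1 d v = slopeZ y.1.1 d v := by
      intro v hv
      have hv' : v ∈ projSub y.1.1 := hK ▸ hv
      have := hom_heq hK h2 hv hv'
      rwa [slopeZHom_apply, slopeZHom_apply] at this
    have hs' : ∀ v, v ∈ projSub y.1.1 → slopeZ y.1.1 d v = slopeZ x.1.1 d v := by
      intro v hv
      exact (hs v (hK ▸ hv)).symm
    have hle := le_of_data x.2 y.2 hK hs
    have hle' := le_of_data y.2 x.2 hK.symm hs'
    exact Subtype.ext (Subtype.ext (le_antisymm hle hle'))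
  haveI : Finite (Σ K : Y, (↥K.1 →+ ZMod d)) := inferInstance
  calc Nat.card _ ≤ Nat.card (Σ K : Y, (↥K.1 →+ ZMod d)) :=
        Nat.card_le_card_of_injective Ψ hinj
    _ ≤ Nat.card Y * d ^ n := by
        haveI : Fintype Y := Fintype.ofFinite Y
        haveI : ∀ K : Y, Fintype (↥K.1 →+ ZMod d) := fun K => Fintype.ofFinite _
        rw [Nat.card_eq_fintype_card, Fintype.card_sigma, Nat.card_eq_fintype_card]
        calc ∑ K : Y, Fintype.card (↥K.1 →+ ZMod d)
            ≤ ∑ _K : Y, d ^ n := by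
              apply Finset.sum_le_sum
              intro K _
              have := hom_card_le K.1 d
              rwa [Nat.card_eq_fintype_card] at this
          _ = Fintype.card Y * d ^ n := by simp [Finset.sum_const, Finset.card_univ]

end Main

lemma finite_prodX (n m : ℕ) (hm : m ≠ 0) :
    Finite {H : AddSubgroup ((Fin n → ℤ) × ℤ) // H.index = m} := by
  haveI := finite_subCount (n + 1) m hm
  exact Finite.of_equiv _ (subCountEquiv (finSnocEquiv n) m)

lemma card_le_sum_fibers {α : Type*} [Finite α] (f : α → ℕ) (t : Finset ℕ)
    (h : ∀ a, f a ∈ t) :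
    Nat.card α ≤ ∑ d ∈ t, Nat.card {a : α // f a = d} := by
  classical
  haveI : Fintype α := Fintype.ofFinite α
  rw [Nat.card_eq_fintype_card, ← Finset.card_univ,
    Finset.card_eq_sum_card_fiberwise (f := f) (t := t) (fun x _ => h x)]
  apply Finset.sum_le_sum
  intro d _
  rw [Nat.card_eq_fintype_card, Fintype.card_subtype]

lemma step_card (n m : ℕ) (hm : m ≠ 0) :
    Nat.card {H : AddSubgroup ((Fin n → ℤ) × ℤ) // H.index = m} ≤
      ∑ d ∈ m.divisors, Nat.card {K : AddSubgroup (Fin n → ℤ) // K.index = m / d} * d ^ n := by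
  haveI := finite_prodX n m hm
  have hmem : ∀ x : {H : AddSubgroup ((Fin n → ℤ) × ℤ) // H.index = m},
      axisIdx x.1 ∈ m.divisors := by
    rintro ⟨H, hH⟩
    refine Nat.mem_divisors.mpr ⟨?_, hm⟩
    exact Dvd.intro _ (by rw [← index_eq_axis_mul_proj, hH])
  calc Nat.card {H : AddSubgroup ((Fin n → ℤ) × ℤ) // H.index = m}
      ≤ ∑ d ∈ m.divisors,
        Nat.card {x : {H : AddSubgroup ((Fin n → ℤ) × ℤ) // H.index = m} // axisIdx x.1 = d} :=
        card_le_sum_fibers _ _ hmem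
    _ ≤ ∑ d ∈ m.divisors, Nat.card {K : AddSubgroup (Fin n → ℤ) // K.index = m / d} * d ^ n :=
        Finset.sum_le_sum (fun d hd => fiber_card_le n m hm d hd)

noncomputable def subCount' (n m : ℕ) : ℕ :=
  Nat.card {H : AddSubgroup (Fin n → ℤ) // H.index = m}

lemma divisors_card_le (m : ℕ) : m.divisors.card ≤ m := by
  have : m.divisors ⊆ Finset.Icc 1 m := by
    intro d hd
    obtain ⟨h1, h2⟩ := Nat.mem_divisors.mp hd
    have hd0 : 0 < d := Nat.pos_of_dvd_of_pos h1 (Nat.pos_of_ne_zero h2)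
    exact Finset.mem_Icc.mpr ⟨hd0, Nat.le_of_dvd (Nat.pos_of_ne_zero h2) h1⟩
  calc m.divisors.card ≤ (Finset.Icc 1 m).card := Finset.card_le_card this
    _ = m := by simp

lemma subCount'_upper : ∀ n m : ℕ, m ≠ 0 → subCount' n m ≤ m ^ n := by
  intro n
  induction n with
  | zero =>
    intro m hm
    have hsub : ∀ a b : AddSubgroup (Fin 0 → ℤ), a = b := by
      intro a b
      ext x
      rw [Subsingleton.elim x (0 : Fin 0 → ℤ)]
      exact iff_of_true a.zero_mem b.zero_mem
    haveI : Subsingleton {H : AddSubgroup (Fin 0 → ℤ) // H.index = m} :=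
      ⟨fun a b => Subtype.ext (hsub a.1 b.1)⟩
    have hle : Nat.card {H : AddSubgroup (Fin 0 → ℤ) // H.index = m} ≤ Nat.card PUnit.{1} :=
      Nat.card_le_card_of_injective (fun _ => PUnit.unit) (fun a b _ => Subsingleton.elim a b)
    simpa [subCount'] using hle
  | succ n ih =>
    intro m hm
    have htrans : subCount' (n+1) m =
        Nat.card {H : AddSubgroup ((Fin n → ℤ) × ℤ) // H.index = m} :=
      Nat.card_congr (subCountEquiv (finSnocEquiv n) m)
    rw [htrans]
    calc Nat.card {H : AddSubgroup ((Fin n → ℤ) × ℤ) // H.index = m}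
        ≤ ∑ d ∈ m.divisors, Nat.card {K : AddSubgroup (Fin n → ℤ) // K.index = m / d} * d ^ n :=
          step_card n m hm
      _ ≤ ∑ d ∈ m.divisors, m ^ n := by
          apply Finset.sum_le_sum
          intro d hd
          obtain ⟨hdvd, -⟩ := Nat.mem_divisors.mp hd
          have hd0 : d ≠ 0 := fun h => hm (Nat.eq_zero_of_zero_dvd (h ▸ hdvd))
          have hmd0 : m / d ≠ 0 :=
            Nat.div_ne_zero_iff.mpr ⟨hd0, Nat.le_of_dvd (Nat.pos_of_ne_zero hm) hdvd⟩
          calc Nat.card {K : AddSubgroup (Fin n → ℤ) // K.index = m / d} * d ^ n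
              ≤ (m / d) ^ n * d ^ n := Nat.mul_le_mul_right _ (ih (m / d) hmd0)
            _ = m ^ n := by rw [← Nat.mul_pow, Nat.div_mul_cancel hdvd]
      _ = m.divisors.card * m ^ n := by rw [Finset.sum_const, smul_eq_mul]
      _ ≤ m * m ^ n := Nat.mul_le_mul_right _ (divisors_card_le m)
      _ = m ^ (n + 1) := by ring

lemma subCount'_lower (k m : ℕ) (hm : m ≠ 0) : m ^ k ≤ subCount' (k + 1) m := by
  haveI : NeZero m := ⟨hm⟩
  haveI := finite_subCount (k + 1) m hm
  have hinj : Function.Injective (fun a : Fin k → ZMod m =>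
      (⟨(linForm (Fin.snoc a 1 : Fin (k+1) → ZMod m)).ker,
        index_ker_linForm _ (Fin.last k) (Fin.snoc_last _ _)⟩ :
        {H : AddSubgroup (Fin (k+1) → ℤ) // H.index = m})) := by
    intro a b h
    exact lower_inj k m (congrArg Subtype.val h)
  have hle := Nat.card_le_card_of_injective _ hinj
  calc m ^ k = Nat.card (Fin k → ZMod m) := by
        simp [Nat.card_eq_fintype_card, ZMod.card]
    _ ≤ subCount' (k + 1) m := hle

/-- `subCount n m` is the number of sublattices (subgroups) of `ℤⁿ` of index `m`. -/
noncomputable def subCount (n m : ℕ) : ℕ :=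
  Nat.card {H : AddSubgroup (Fin n → ℤ) // H.index = m}

/-- For every positive `m` and `n ≥ 1`, `m^{n-1} ≤ f_n(m) ≤ m^n`. -/
theorem subCount_bounds (n m : ℕ) (hn : 1 ≤ n) (hm : 1 ≤ m) :
    m ^ (n - 1) ≤ subCount n m ∧ subCount n m ≤ m ^ n := by
  have hm0 : m ≠ 0 := Nat.one_le_iff_ne_zero.mp hm
  obtain ⟨k, rfl⟩ : ∃ k, n = k + 1 := ⟨n - 1, (Nat.succ_pred_eq_of_pos hn).symm⟩
  have hdef : subCount (k + 1) m = subCount' (k + 1) m := rfl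
  constructor
  · rw [hdef]
    simpa using subCount'_lower k m hm0
  · rw [hdef]
    exact subCount'_upper (k + 1) m hm0
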